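/- Let Γ be a countable subgroup of SL(2,ℝ)×SL(2,ℝ) and let A, α, ε > 0 be such that N_Γ(x,R) < A·e^{αR} for every x ∈ SL(2,ℝ) and R > 0. Fix an integer k ≥ 1 and b = (b₀,…,b_{k−1}) ∈ ℝ^k with b ≠ 0, set ψ_{m,b} := Σ_{j=0}^{k−1} b_j ψ_{m,3^j} and f_b(u) := Σ_{j=0}^{k−1} b_j cos(3^j θ_{a(b),3}) u^{3^j}. Then for every integer m with 2m > m(3^{k−1}A, α, ε, 3^{k−1}) and every x ∈ SL(2,ℝ) with ‖x‖ ≤ 4ε, the family (|ψ_{m,b}(γ₁⁻¹ x γ₂)|)_{γ ∈ Γ, ‖γ₁⁻¹ x γ₂‖ > 4ε} is summable and Σ_{γ=(γ₁,γ₂) ∈ Γ, ‖γ₁⁻¹ x γ₂‖ > 4ε} |ψ_{m,b}(γ₁⁻¹ x γ₂)| < (cosh ε)^{−2m} · f_b(tanh ε). -/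

import Mathlib

open Real

noncomputable section

abbrev SL2 := Matrix.SpecialLinearGroup (Fin 2) ℝ

/-- inverse hyperbolic cosine -/
def acosh (x : ℝ) : ℝ := Real.log (x + Real.sqrt (x ^ 2 - 1))

/-- the "pseudo-distance from the origin" ‖g‖ = arcosh((g₁₁²+g₁₂²+g₂₁²+g₂₂²)/2) -/
def gnorm (g : SL2) : ℝ :=
  acosh ((g.1 0 0 ^ 2 + g.1 0 1 ^ 2 + g.1 1 0 ^ 2 + g.1 1 1 ^ 2) / 2)

def z1 (x : SL2) : ℂ :=
  (((x.1 0 0 + x.1 1 1 : ℝ) : ℂ) + Complex.I * ((x.1 1 0 - x.1 0 1 : ℝ) : ℂ)) / 2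

def z2 (x : SL2) : ℂ :=
  (((x.1 0 1 + x.1 1 0 : ℝ) : ℂ) + Complex.I * ((x.1 0 0 - x.1 1 1 : ℝ) : ℂ)) / 2

/-- the spherical function ψ_{m,k}(x) = z₁(x)^{-(k+2m)} z₂(x)^k -/
def psi (m k : ℕ) (x : SL2) : ℂ := z1 x ^ (-(k + 2 * m : ℤ)) * z2 x ^ k

/-- γ is central iff both components are ±1 -/
def IsCentral (γ : SL2 × SL2) : Prop :=
  (γ.1.1 = 1 ∨ γ.1.1 = -1) ∧ (γ.2.1 = 1 ∨ γ.2.1 = -1)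

/-- ε_Γ -/
def epsGamma (Γ : Set (SL2 × SL2)) : ℝ :=
  (1 / 3) * sInf {r | ∃ γ ∈ Γ, ¬IsCentral γ ∧ r = |gnorm γ.1 - gnorm γ.2|}

/-- the set counted by N_Γ(x,R) -/
def orbitSet (Γ : Set (SL2 × SL2)) (x : SL2) (R : ℝ) : Set (SL2 × SL2) :=
  {γ | γ ∈ Γ ∧ gnorm (γ.1 * x * γ.2⁻¹) ≤ R}

/-- the constant m(C,α,ε,s) -/
def mConst (C α ε : ℝ) (s : ℕ) : ℝ :=
  (Real.log 2 * s + 2 * α * ε + Real.log (1 + 2 ^ s * C * Real.exp (6 * α * ε))) /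
    Real.log (Real.cosh ε)

def chi (x : ℝ) : ℝ := if x = 1 then 0 else 1

/-- θ_{a,N} for a tuple a of length k (with the convention a_{-1} = 1) -/
def thetaAN (a : ℕ → ℝ) (k : ℕ) (N : ℝ) : ℝ :=
  Real.pi * ∑ i ∈ Finset.range k,
    (chi (a i) - if i = 0 then 0 else chi (a (i - 1))) * N ^ (-(i : ℤ))

/-- the sign tuple a(b) attached to b -/
def signOf (b : ℕ → ℝ) (j : ℕ) : ℝ := if 0 ≤ b j then 1 else -1

/-- ψ_{m,b} = Σ_{j<k} b_j ψ_{m,3^j} -/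
def psiB (m k : ℕ) (b : ℕ → ℝ) (x : SL2) : ℂ :=
  ∑ j ∈ Finset.range k, (b j : ℂ) * psi m (3 ^ j) x

/-- f_b(u) = Σ_{j<k} b_j cos(3^j θ_{a(b),3}) u^{3^j} -/
def fb (k : ℕ) (b : ℕ → ℝ) (u : ℝ) : ℝ :=
  ∑ j ∈ Finset.range k, b j * Real.cos (3 ^ j * thetaAN (signOf b) k 3) * u ^ 3 ^ j

/-- the rotation matrix k(θ) -/
def kMat (θ : ℝ) : SL2 :=
  ⟨!![Real.cos θ, -Real.sin θ; Real.sin θ, Real.cos θ], by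
    simp [Matrix.det_fin_two_of]
    nlinarith [Real.sin_sq_add_cos_sq θ]⟩

/-- the diagonal matrix a(t) -/
def aMat (t : ℝ) : SL2 :=
  ⟨!![Real.exp t, 0; 0, Real.exp (-t)], by
    simp [Matrix.det_fin_two_of, ← Real.exp_add]⟩

end

namespace Stmt2Aux

open Real Finset

/-! ### hyperbolic helpers -/

lemma tanh_nonneg' {x : ℝ} (hx : 0 ≤ x) : 0 ≤ Real.tanh x := by
  rw [Real.tanh_eq_sinh_div_cosh]
  exact div_nonneg (Real.sinh_nonneg_iff.2 hx) (Real.cosh_pos x).le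

lemma tanh_lt_one' (x : ℝ) : Real.tanh x < 1 := by
  rw [Real.tanh_eq_sinh_div_cosh, div_lt_one (Real.cosh_pos x)]
  nlinarith [Real.cosh_sub_sinh x, Real.exp_pos (-x)]

lemma tanh_pos' {x : ℝ} (hx : 0 < x) : 0 < Real.tanh x := by
  rw [Real.tanh_eq_sinh_div_cosh]
  exact div_pos (Real.sinh_pos_iff.2 hx) (Real.cosh_pos x)

lemma tanh_le_tanh' {x y : ℝ} (hx : 0 ≤ x) (hxy : x ≤ y) : Real.tanh x ≤ Real.tanh y := by
  rw [Real.tanh_eq_sinh_div_cosh, Real.tanh_eq_sinh_div_cosh,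
    div_le_div_iff₀ (Real.cosh_pos x) (Real.cosh_pos y)]
  have h : 0 ≤ Real.sinh (y - x) := Real.sinh_nonneg_iff.2 (by linarith)
  rw [Real.sinh_sub] at h
  nlinarith

lemma tanh_add_le' {x y : ℝ} (hx : 0 ≤ x) (hy : 0 ≤ y) :
    Real.tanh (x + y) ≤ Real.tanh x + Real.tanh y := by
  rw [Real.tanh_eq_sinh_div_cosh, Real.tanh_eq_sinh_div_cosh, Real.tanh_eq_sinh_div_cosh]
  have hcx := Real.cosh_pos x
  have hcy := Real.cosh_pos y
  have hsx := Real.sinh_nonneg_iff.2 hx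
  have hsy := Real.sinh_nonneg_iff.2 hy
  have h1 : Real.cosh x * Real.cosh y ≤ Real.cosh (x + y) := by
    rw [Real.cosh_add]; nlinarith
  have h2 : 0 ≤ Real.sinh (x + y) := Real.sinh_nonneg_iff.2 (by linarith)
  calc Real.sinh (x + y) / Real.cosh (x + y) ≤ Real.sinh (x + y) / (Real.cosh x * Real.cosh y) := by
        apply div_le_div_of_nonneg_left h2 (by positivity) h1
    _ = Real.sinh x / Real.cosh x + Real.sinh y / Real.cosh y := by
        rw [Real.sinh_add]; field_simp

lemma tanh_nat_mul_le {t : ℝ} (ht : 0 ≤ t) (n : ℕ) : Real.tanh (n * t) ≤ n * Real.tanh t := by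
  induction n with
  | zero => simp [Real.tanh_eq_sinh_div_cosh]
  | succ n ih =>
      have : ((n : ℝ) + 1) * t = n * t + t := by ring
      rw [Nat.cast_add, Nat.cast_one, this]
      calc Real.tanh (n * t + t) ≤ Real.tanh (n * t) + Real.tanh t :=
            tanh_add_le' (by positivity) ht
        _ ≤ n * Real.tanh t + Real.tanh t := by linarith
        _ = ((n : ℝ) + 1) * Real.tanh t := by ring

lemma cosh_pow_le_cosh_nat_mul {t : ℝ} (ht : 0 ≤ t) (n : ℕ) :
    Real.cosh t ^ n ≤ Real.cosh (n * t) := by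
  induction n with
  | zero => simp
  | succ n ih =>
      have h1 : ((n : ℝ) + 1) * t = n * t + t := by ring
      rw [Nat.cast_add, Nat.cast_one, h1, pow_succ, Real.cosh_add]
      have hsx := Real.sinh_nonneg_iff.2 (show (0:ℝ) ≤ n * t by positivity)
      have hsy := Real.sinh_nonneg_iff.2 ht
      nlinarith [Real.cosh_pos t, Real.cosh_pos ((n:ℝ) * t)]

/-! ### acosh -/

lemma cosh_acosh {q : ℝ} (hq : 1 ≤ q) : Real.cosh (acosh q) = q := by
  have hq2 : (0:ℝ) ≤ q ^ 2 - 1 := by nlinarith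
  have hs : 0 ≤ Real.sqrt (q ^ 2 - 1) := Real.sqrt_nonneg _
  have hu : 0 < q + Real.sqrt (q ^ 2 - 1) := by linarith
  have hmul : (q + Real.sqrt (q ^ 2 - 1)) * (q - Real.sqrt (q ^ 2 - 1)) = 1 := by
    have := Real.sq_sqrt hq2
    nlinarith
  have hinv : (q + Real.sqrt (q ^ 2 - 1))⁻¹ = q - Real.sqrt (q ^ 2 - 1) :=
    inv_eq_of_mul_eq_one_right hmul
  unfold acosh
  rw [Real.cosh_eq, Real.exp_log hu, Real.exp_neg, Real.exp_log hu, hinv]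
  ring

lemma acosh_nonneg {q : ℝ} (hq : 1 ≤ q) : 0 ≤ acosh q := by
  unfold acosh
  apply Real.log_nonneg
  have := Real.sqrt_nonneg (q ^ 2 - 1)
  linarith

/-! ### SL2 lemmas -/

lemma det_entry (y : SL2) : y.1 0 0 * y.1 1 1 - y.1 0 1 * y.1 1 0 = 1 := by
  have h := y.2
  rwa [Matrix.det_fin_two] at h

lemma sq_abs_z1 (y : SL2) :
    ‖z1 y‖ ^ 2 = ((y.1 0 0 + y.1 1 1) ^ 2 + (y.1 1 0 - y.1 0 1) ^ 2) / 4 := by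
  have hz : z1 y = Complex.ofReal ((y.1 0 0 + y.1 1 1) / 2)
      + Complex.ofReal ((y.1 1 0 - y.1 0 1) / 2) * Complex.I := by
    unfold z1; push_cast; ring
  rw [hz, Complex.sq_norm, Complex.normSq_add_mul_I]; ring

lemma sq_abs_z2 (y : SL2) :
    ‖z2 y‖ ^ 2 = ((y.1 0 1 + y.1 1 0) ^ 2 + (y.1 0 0 - y.1 1 1) ^ 2) / 4 := by
  have hz : z2 y = Complex.ofReal ((y.1 0 1 + y.1 1 0) / 2)
      + Complex.ofReal ((y.1 0 0 - y.1 1 1) / 2) * Complex.I := by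
    unfold z2; push_cast; ring
  rw [hz, Complex.sq_norm, Complex.normSq_add_mul_I]; ring

lemma sq_sub (y : SL2) : ‖z1 y‖ ^ 2 - ‖z2 y‖ ^ 2 = 1 := by
  rw [sq_abs_z1, sq_abs_z2]
  linear_combination det_entry y

lemma one_le_Q (y : SL2) :
    1 ≤ (y.1 0 0 ^ 2 + y.1 0 1 ^ 2 + y.1 1 0 ^ 2 + y.1 1 1 ^ 2) / 2 := by
  nlinarith [det_entry y, sq_nonneg (y.1 0 0 - y.1 1 1), sq_nonneg (y.1 0 1 + y.1 1 0)]

lemma gnorm_nonneg' (y : SL2) : 0 ≤ gnorm y := by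
  unfold gnorm
  exact acosh_nonneg (one_le_Q y)

lemma cosh_gnorm' (y : SL2) :
    Real.cosh (gnorm y) = ‖z1 y‖ ^ 2 + ‖z2 y‖ ^ 2 := by
  have h1 : ‖z1 y‖ ^ 2 + ‖z2 y‖ ^ 2
      = (y.1 0 0 ^ 2 + y.1 0 1 ^ 2 + y.1 1 0 ^ 2 + y.1 1 1 ^ 2) / 2 := by
    rw [sq_abs_z1, sq_abs_z2]; ring
  unfold gnorm
  rw [cosh_acosh (one_le_Q y), h1]

lemma r1_eq (y : SL2) : ‖z1 y‖ = Real.cosh (gnorm y / 2) := by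
  have hsub := sq_sub y
  have hcosh := cosh_gnorm' y
  have h2 : Real.cosh (gnorm y) = 2 * Real.cosh (gnorm y / 2) ^ 2 - 1 := by
    have h := Real.cosh_two_mul (gnorm y / 2)
    have h' : 2 * (gnorm y / 2) = gnorm y := by ring
    rw [h'] at h
    have := Real.cosh_sq (gnorm y / 2)
    linarith
  have hsq : ‖z1 y‖ ^ 2 = Real.cosh (gnorm y / 2) ^ 2 := by linarith
  have hfac : (‖z1 y‖ - Real.cosh (gnorm y / 2))
      * (‖z1 y‖ + Real.cosh (gnorm y / 2)) = 0 := by linear_combination hsq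
  rcases mul_eq_zero.1 hfac with h | h
  · linarith
  · have := norm_nonneg (z1 y)
    have := Real.cosh_pos (gnorm y / 2)
    linarith

lemma r2_eq (y : SL2) : ‖z2 y‖ = Real.sinh (gnorm y / 2) := by
  have hsub := sq_sub y
  have h1 := r1_eq y
  have hs := Real.cosh_sq (gnorm y / 2)
  have h1sq : ‖z1 y‖ ^ 2 = Real.cosh (gnorm y / 2) ^ 2 := by rw [h1]
  have hsq : ‖z2 y‖ ^ 2 = Real.sinh (gnorm y / 2) ^ 2 := by linarith
  have hfac : (‖z2 y‖ - Real.sinh (gnorm y / 2))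
      * (‖z2 y‖ + Real.sinh (gnorm y / 2)) = 0 := by linear_combination hsq
  rcases mul_eq_zero.1 hfac with h | h
  · linarith
  · have h3 := norm_nonneg (z2 y)
    have h4 : 0 ≤ Real.sinh (gnorm y / 2) :=
      Real.sinh_nonneg_iff.2 (by linarith [gnorm_nonneg' y])
    have h5 : ‖z2 y‖ = 0 := by linarith
    have h6 : Real.sinh (gnorm y / 2) = 0 := by linarith
    rw [h5, h6]

lemma one_le_r1 (y : SL2) : 1 ≤ ‖z1 y‖ := by
  rw [r1_eq]; exact Real.one_le_cosh _

lemma abs_psi_eq (m K : ℕ) (y : SL2) :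
    ‖psi m K y‖
      = Real.tanh (gnorm y / 2) ^ K * (Real.cosh (gnorm y / 2) ^ (2 * m))⁻¹ := by
  have h1 := r1_eq y
  have h2 := r2_eq y
  have hpos : 0 < Real.cosh (gnorm y / 2) := Real.cosh_pos _
  have hz : z1 y ≠ 0 := by
    intro h
    have := one_le_r1 y
    rw [h] at this; simp at this; linarith
  unfold psi
  rw [norm_mul, norm_zpow, norm_pow, h1, h2, Real.tanh_eq_sinh_div_cosh]
  have hcast : (-((K : ℤ) + 2 * m)) = -(((K + 2 * m : ℕ)) : ℤ) := by push_cast; ring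
  rw [hcast, zpow_neg, zpow_natCast, div_pow, pow_add]
  field_simp

lemma core {ε : ℝ} (hε : 0 < ε) (m K : ℕ) (y : SL2) (n : ℕ) (hn : 3 ≤ n)
    (hlo : 2 * ((n : ℝ) - 1) * ε < gnorm y) (hup : gnorm y ≤ 2 * n * ε) :
    ‖psi m K y‖
      ≤ ((n : ℝ) * Real.tanh ε) ^ K * ((Real.cosh ε ^ (n - 1)) ^ (2 * m))⁻¹ := by
  have hg0 : 0 ≤ gnorm y := gnorm_nonneg' y
  have hh2 : ((n : ℝ) - 1) * ε ≤ gnorm y / 2 := by linarith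
  have hh3 : gnorm y / 2 ≤ (n : ℝ) * ε := by linarith
  have hh0 : 0 ≤ gnorm y / 2 := by linarith
  rw [abs_psi_eq]
  have ht : Real.tanh (gnorm y / 2) ^ K ≤ ((n : ℝ) * Real.tanh ε) ^ K := by
    apply pow_le_pow_left₀ (tanh_nonneg' hh0)
    calc Real.tanh (gnorm y / 2) ≤ Real.tanh ((n : ℝ) * ε) := tanh_le_tanh' hh0 hh3
      _ ≤ (n : ℝ) * Real.tanh ε := tanh_nat_mul_le hε.le n
  have hcastn : (((n - 1 : ℕ)) : ℝ) = (n : ℝ) - 1 := by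
    have h1 : 1 ≤ n := by omega
    push_cast [Nat.cast_sub h1]
    ring
  have hc : Real.cosh ε ^ (n - 1) ≤ Real.cosh (gnorm y / 2) := by
    calc Real.cosh ε ^ (n - 1) ≤ Real.cosh (((n - 1 : ℕ)) * ε) :=
          cosh_pow_le_cosh_nat_mul hε.le _
      _ ≤ Real.cosh (gnorm y / 2) := by
          rw [Real.cosh_le_cosh, abs_of_nonneg (mul_nonneg (Nat.cast_nonneg _) hε.le), abs_of_nonneg hh0, hcastn]
          exact hh2
  have hcp : 0 < Real.cosh ε ^ (n - 1) := by positivity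
  have hinv : (Real.cosh (gnorm y / 2) ^ (2 * m))⁻¹
      ≤ ((Real.cosh ε ^ (n - 1)) ^ (2 * m))⁻¹ := by
    apply inv_anti₀ (pow_pos hcp _)
    exact pow_le_pow_left₀ hcp.le hc _
  exact mul_le_mul ht hinv
    (inv_nonneg.2 (pow_nonneg (Real.cosh_pos _).le _))
    (pow_nonneg (mul_nonneg (Nat.cast_nonneg n) (tanh_nonneg' hε.le)) K)

/-! ### arithmetic lemmas -/

lemma le_three_mul_pow (i : ℕ) : ((i : ℝ) + 3) ≤ 3 * (4 / 3) ^ i := by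
  induction i with
  | zero => norm_num
  | succ n ih =>
      have h1 : (1 : ℝ) ≤ (4 / 3 : ℝ) ^ n := by nlinarith [Nat.cast_nonneg (α := ℝ) n]
      rw [pow_succ]
      push_cast
      nlinarith

lemma keyIneq (s : ℕ) (hs : 1 ≤ s) (i : ℕ) (X : ℝ) (hX : 2 ≤ X) :
    ((i : ℝ) + 3) ^ s * (1 + X)
      ≤ (3 / 2) ^ s * (2 / 9) ^ i * 2 ^ (s * (i + 1)) * (1 + X) ^ (i + 1) := by
  have hX0 : (0 : ℝ) ≤ 1 + X := by linarith
  have e1 : ((3 : ℝ) * (4 / 3) ^ i) ^ s = 3 ^ s * (2 ^ (s * i) * (2 / 3) ^ (s * i)) := by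
    rw [mul_pow, ← pow_mul, Nat.mul_comm i s, show ((4 : ℝ) / 3) = 2 * (2 / 3) by norm_num,
      mul_pow]
  have h23 : ((2 : ℝ) / 3) ^ (s * i) ≤ (2 / 3) ^ i := by
    apply pow_le_pow_of_le_one (by norm_num) (by norm_num)
    calc i = 1 * i := (one_mul i).symm
      _ ≤ s * i := Nat.mul_le_mul_right i hs
  have h4 : (3 : ℝ) ^ i * (1 + X) ≤ (1 + X) ^ (i + 1) := by
    rw [pow_succ]
    exact mul_le_mul_of_nonneg_right (pow_le_pow_left₀ (by norm_num) (by linarith) i) hX0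
  have e2 : (3 / 2 : ℝ) ^ s * (2 / 9) ^ i * 2 ^ (s * (i + 1)) * (1 + X) ^ (i + 1)
      = 3 ^ s * (2 ^ (s * i) * (2 / 3) ^ i) * ((1 / 3) ^ i * (1 + X) ^ (i + 1)) := by
    have e3 : (2 : ℝ) ^ (s * (i + 1)) = 2 ^ (s * i) * 2 ^ s := by
      rw [Nat.mul_succ, pow_add]
    have a1 : ((2 : ℝ) / 9) ^ i = (2 / 3) ^ i * (1 / 3) ^ i := by
      rw [← mul_pow]; norm_num
    have a3 : ((3 : ℝ)) ^ s = (3 / 2) ^ s * 2 ^ s := by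
      rw [← mul_pow]; norm_num
    rw [e3, a1, a3]
    ring
  calc ((i : ℝ) + 3) ^ s * (1 + X)
      ≤ ((3 : ℝ) * (4 / 3) ^ i) ^ s * (1 + X) := by
        exact mul_le_mul_of_nonneg_right
          (pow_le_pow_left₀ (by positivity) (le_three_mul_pow i) s) hX0
    _ = 3 ^ s * (2 ^ (s * i) * (2 / 3) ^ (s * i)) * (1 + X) := by rw [e1]
    _ ≤ 3 ^ s * (2 ^ (s * i) * (2 / 3) ^ i) * (1 + X) := by
        apply mul_le_mul_of_nonneg_right _ hX0
        apply mul_le_mul_of_nonneg_left _ (by positivity)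
        exact mul_le_mul_of_nonneg_left h23 (by positivity)
    _ ≤ 3 ^ s * (2 ^ (s * i) * (2 / 3) ^ i) * ((1 / 3) ^ i * (1 + X) ^ (i + 1)) := by
        apply mul_le_mul_of_nonneg_left _ (by positivity)
        have h6 := mul_le_mul_of_nonneg_left h4 (show (0:ℝ) ≤ (1/3) ^ i by positivity)
        rw [← mul_assoc, ← mul_pow] at h6
        norm_num at h6
        exact h6
    _ = (3 / 2) ^ s * (2 / 9) ^ i * 2 ^ (s * (i + 1)) * (1 + X) ^ (i + 1) := e2.symm

lemma perN (s K m2 : ℕ) (i : ℕ) (A e2 τ X c : ℝ)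
    (hA : 0 ≤ A) (he2 : 1 ≤ e2) (hτ : 0 ≤ τ) (hX : 2 ≤ X) (hs : 1 ≤ s) (hK : K ≤ s)
    (hc0 : 0 < c) (hD : 2 ^ s * e2 * (1 + X) ≤ c ^ m2) :
    A * e2 ^ (i + 3) * (((i : ℝ) + 3) * τ) ^ K * ((c ^ (i + 2)) ^ m2)⁻¹
      ≤ A * e2 ^ 2 * (3 / 2) ^ s * (1 + X)⁻¹ * τ ^ K * (c ^ m2)⁻¹ * (2 / 9) ^ i := by
  have hX0 : (0 : ℝ) < 1 + X := by linarith
  have he20 : (0 : ℝ) < e2 := by linarith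
  have hD0 : (0 : ℝ) < 2 ^ s * e2 * (1 + X) := by positivity
  have hcm : (0 : ℝ) < c ^ m2 := pow_pos hc0 _
  have h1 : (c ^ (i + 2)) ^ m2 = c ^ m2 * (c ^ m2) ^ (i + 1) := by
    rw [← pow_mul, ← pow_mul, ← pow_add]
    congr 1
    ring
  have h2 : (2 ^ s * e2 * (1 + X)) ^ (i + 1) ≤ (c ^ m2) ^ (i + 1) :=
    pow_le_pow_left₀ hD0.le hD _
  have h3 : ((c ^ (i + 2)) ^ m2)⁻¹ ≤ (c ^ m2 * (2 ^ s * e2 * (1 + X)) ^ (i + 1))⁻¹ := by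
    rw [h1]
    apply inv_anti₀ (by positivity)
    exact mul_le_mul_of_nonneg_left h2 hcm.le
  have step1 : A * e2 ^ (i + 3) * (((i : ℝ) + 3) * τ) ^ K * ((c ^ (i + 2)) ^ m2)⁻¹
      ≤ A * e2 ^ (i + 3) * (((i : ℝ) + 3) * τ) ^ K
        * (c ^ m2 * (2 ^ s * e2 * (1 + X)) ^ (i + 1))⁻¹ := by
    apply mul_le_mul_of_nonneg_left h3
    have : (0:ℝ) ≤ ((i : ℝ) + 3) * τ := by positivity
    positivity
  refine step1.trans ?_
  have hDp : (0:ℝ) < (2 ^ s * e2 * (1 + X)) ^ (i + 1) := pow_pos hD0 _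
  have e4 : A * e2 ^ (i + 3) * (((i : ℝ) + 3) * τ) ^ K
        * (c ^ m2 * (2 ^ s * e2 * (1 + X)) ^ (i + 1))⁻¹
      = A * e2 ^ (i + 3) * (((i : ℝ) + 3) * τ) ^ K
        / (c ^ m2 * (2 ^ s * e2 * (1 + X)) ^ (i + 1)) := by
    rw [div_eq_mul_inv]
  have e5 : A * e2 ^ 2 * (3 / 2) ^ s * (1 + X)⁻¹ * τ ^ K * (c ^ m2)⁻¹ * (2 / 9) ^ i
      = A * e2 ^ 2 * (3 / 2) ^ s * τ ^ K * (2 / 9) ^ i / (c ^ m2 * (1 + X)) := by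
    rw [eq_div_iff (mul_pos hcm hX0).ne']
    field_simp
  rw [e4, e5, div_le_div_iff₀ (mul_pos hcm hDp) (mul_pos hcm hX0)]
  have hkey := keyIneq s hs i X hX
  have hi3 : (1:ℝ) ≤ (i : ℝ) + 3 := by
    have : (0:ℝ) ≤ (i : ℝ) := Nat.cast_nonneg i
    linarith
  have hpowK : (((i : ℝ) + 3)) ^ K ≤ ((i : ℝ) + 3) ^ s := pow_le_pow_right₀ hi3 hK
  have hnn : (0:ℝ) ≤ A * τ ^ K * c ^ m2 * e2 ^ (i + 3) :=
    mul_nonneg (mul_nonneg (mul_nonneg hA (pow_nonneg hτ _)) hcm.le)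
      (pow_nonneg he20.le _)
  calc A * e2 ^ (i + 3) * (((i : ℝ) + 3) * τ) ^ K * (c ^ m2 * (1 + X))
      = (A * τ ^ K * c ^ m2 * e2 ^ (i + 3)) * (((i : ℝ) + 3) ^ K * (1 + X)) := by
        rw [mul_pow]; ring
    _ ≤ (A * τ ^ K * c ^ m2 * e2 ^ (i + 3)) * (((i : ℝ) + 3) ^ s * (1 + X)) := by
        apply mul_le_mul_of_nonneg_left _ hnn
        exact mul_le_mul_of_nonneg_right hpowK hX0.le
    _ ≤ (A * τ ^ K * c ^ m2 * e2 ^ (i + 3))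
        * ((3 / 2) ^ s * (2 / 9) ^ i * 2 ^ (s * (i + 1)) * (1 + X) ^ (i + 1)) :=
        mul_le_mul_of_nonneg_left hkey hnn
    _ = A * e2 ^ 2 * (3 / 2) ^ s * τ ^ K * (2 / 9) ^ i
        * (c ^ m2 * (2 ^ s * e2 * (1 + X)) ^ (i + 1)) := by
        rw [mul_pow (2 ^ s * e2) (1 + X), mul_pow ((2:ℝ) ^ s) e2, ← pow_mul]
        ring

lemma sum_pow_sub_le (t : Finset ℕ) (h3 : ∀ n ∈ t, 3 ≤ n) :
    ∑ n ∈ t, ((2 : ℝ) / 9) ^ (n - 3) ≤ 9 / 7 := by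
  have hinj : ∀ x ∈ t, ∀ y ∈ t, x - 3 = y - 3 → x = y := by
    intro x hx y hy h
    have := h3 x hx; have := h3 y hy; omega
  rw [← Finset.sum_image hinj]
  have hsum : Summable (fun l : ℕ => ((2 : ℝ) / 9) ^ l) :=
    summable_geometric_of_lt_one (by norm_num) (by norm_num)
  calc ∑ l ∈ t.image (· - 3), ((2 : ℝ) / 9) ^ l
      ≤ ∑' l : ℕ, ((2 : ℝ) / 9) ^ l :=
        Summable.sum_le_tsum _ (fun l _ => by positivity) hsum
    _ = (1 - 2 / 9)⁻¹ := tsum_geometric_of_lt_one (by norm_num) (by norm_num)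
    _ ≤ 9 / 7 := by norm_num

/-! ### trigonometric lemma -/

lemma tele (cz : ℕ → ℤ) (j : ℕ) :
    ∑ i ∈ Finset.range (j + 1), (cz i - if i = 0 then 0 else cz (i - 1)) = cz j := by
  induction j with
  | zero => simp
  | succ n ih =>
      rw [Finset.sum_range_succ, ih]
      simp

lemma trig (k : ℕ) (b : ℕ → ℝ) (j : ℕ) (hj : j < k) :
    |b j| * ((3 : ℝ) ^ (k - 1))⁻¹ ≤ b j * Real.cos ((3 : ℝ) ^ j * thetaAN (signOf b) k 3) := by
  have h3ne : (3 : ℝ) ≠ 0 := by norm_num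
  set cz : ℕ → ℤ := fun i => if 0 ≤ b i then 0 else 1 with hcz
  have hchi : ∀ i, chi (signOf b i) = ((cz i : ℤ) : ℝ) := by
    intro i
    by_cases h : 0 ≤ b i <;> simp [chi, signOf, cz, h] <;> norm_num
  -- rewrite 3^j θ
  have hsplit : (3 : ℝ) ^ j * thetaAN (signOf b) k 3 =
      Real.pi * ∑ i ∈ Finset.range k,
        (((cz i : ℤ) : ℝ) - if i = 0 then 0 else ((cz (i - 1) : ℤ) : ℝ))
          * (3 : ℝ) ^ ((j : ℤ) - (i : ℤ)) := by
    unfold thetaAN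
    rw [← mul_assoc, mul_comm ((3 : ℝ) ^ j) Real.pi, mul_assoc, Finset.mul_sum]
    congr 1
    refine Finset.sum_congr rfl fun i _ => ?_
    rw [hchi i]
    have hc' : (if i = 0 then (0 : ℝ) else chi (signOf b (i - 1)))
        = (if i = 0 then (0 : ℝ) else ((cz (i - 1) : ℤ) : ℝ)) := by
      split_ifs <;> simp [hchi]
    rw [hc', ← mul_assoc, mul_comm ((3 : ℝ) ^ j), mul_assoc]
    congr 1
    rw [← zpow_natCast (3 : ℝ) j, ← zpow_add₀ h3ne]
    congr 1
  have hjk : j + 1 ≤ k := hj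
  rw [← Finset.sum_range_add_sum_Ico _ hjk, mul_add] at hsplit
  set t : ℝ := ∑ i ∈ Finset.Ico (j + 1) k,
      (((cz i : ℤ) : ℝ) - if i = 0 then 0 else ((cz (i - 1) : ℤ) : ℝ))
        * (3 : ℝ) ^ ((j : ℤ) - (i : ℤ)) with ht
  set Pz : ℤ := ∑ i ∈ Finset.range (j + 1),
      (cz i - if i = 0 then 0 else cz (i - 1)) * 3 ^ (j - i) with hPz
  have hPzc : ((Pz : ℤ) : ℝ) = ∑ i ∈ Finset.range (j + 1),
      (((cz i : ℤ) : ℝ) - if i = 0 then 0 else ((cz (i - 1) : ℤ) : ℝ))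
        * (3 : ℝ) ^ ((j : ℤ) - (i : ℤ)) := by
    rw [hPz]
    push_cast
    refine Finset.sum_congr rfl fun i hi => ?_
    have hik : i ≤ j := by
      have := Finset.mem_range.1 hi; omega
    have h3c : ((3 : ℝ) ^ (j - i) : ℝ) = (3 : ℝ) ^ ((j : ℤ) - (i : ℤ)) := by
      rw [← zpow_natCast (3 : ℝ) (j - i)]
      congr 1
      omega
    rw [← h3c]
  -- telescoping and parity
  have htele : ∑ i ∈ Finset.range (j + 1),
      (cz i - if i = 0 then 0 else cz (i - 1)) = cz j := tele cz j
  have heven : (2 : ℤ) ∣ Pz - cz j := by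
    have hrw : Pz - cz j = ∑ i ∈ Finset.range (j + 1),
        (cz i - if i = 0 then 0 else cz (i - 1)) * (3 ^ (j - i) - 1) := by
      rw [hPz]
      conv_lhs => rw [← htele]
      rw [← Finset.sum_sub_distrib]
      refine Finset.sum_congr rfl fun i _ => ?_
      ring
    rw [hrw]
    apply Finset.dvd_sum
    intro i _
    apply Dvd.dvd.mul_left
    have hodd : Odd ((3 : ℤ) ^ (j - i)) := Odd.pow ⟨1, by norm_num⟩
    obtain ⟨c, hc⟩ := hodd
    exact ⟨c, by omega⟩
  obtain ⟨q, hq⟩ := heven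
  -- cos value
  have hcosval : Real.cos ((3 : ℝ) ^ j * thetaAN (signOf b) k 3)
      = (if 0 ≤ b j then (1 : ℝ) else -1) * Real.cos (Real.pi * t) := by
    rw [hsplit, ← hPzc]
    have hPzq : Pz = 2 * q + cz j := by omega
    by_cases hb : 0 ≤ b j
    · have hczj : cz j = 0 := by simp [cz, hb]
      rw [hPzq, hczj]
      push_cast
      rw [show Real.pi * (2 * (q : ℝ) + 0) + Real.pi * t
          = Real.pi * t + (q : ℝ) * (2 * Real.pi) from by ring]
      rw [Real.cos_add_int_mul_two_pi, if_pos hb, one_mul]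
    · have hczj : cz j = 1 := by simp [cz, hb]
      rw [hPzq, hczj]
      push_cast
      rw [show Real.pi * (2 * (q : ℝ) + 1) + Real.pi * t
          = (Real.pi * t + Real.pi) + (q : ℝ) * (2 * Real.pi) from by ring]
      rw [Real.cos_add_int_mul_two_pi, Real.cos_add_pi, if_neg hb]
      ring
  -- reduce to cos bound
  set L : ℕ := k - 1 - j with hL
  set δ : ℝ := ((3 : ℝ) ^ L)⁻¹ with hδ
  have hδ0 : 0 < δ := by positivity
  have hδ1 : δ ≤ 1 := by
    rw [hδ]
    apply inv_le_one_of_one_le₀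
    exact one_le_pow₀ (by norm_num : (1:ℝ) ≤ 3)
  -- bound on |t|
  have htb : |t| ≤ (1 - δ) / 2 := by
    rw [ht]
    calc |∑ i ∈ Finset.Ico (j + 1) k,
        (((cz i : ℤ) : ℝ) - if i = 0 then 0 else ((cz (i - 1) : ℤ) : ℝ))
          * (3 : ℝ) ^ ((j : ℤ) - (i : ℤ))|
        ≤ ∑ i ∈ Finset.Ico (j + 1) k,
          |(((cz i : ℤ) : ℝ) - if i = 0 then 0 else ((cz (i - 1) : ℤ) : ℝ))
            * (3 : ℝ) ^ ((j : ℤ) - (i : ℤ))| := Finset.abs_sum_le_sum_abs _ _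
      _ ≤ ∑ i ∈ Finset.Ico (j + 1) k, (3 : ℝ) ^ ((j : ℤ) - (i : ℤ)) := by
          refine Finset.sum_le_sum fun i _ => ?_
          rw [abs_mul]
          have h1 : |(3 : ℝ) ^ ((j : ℤ) - (i : ℤ))| = (3 : ℝ) ^ ((j : ℤ) - (i : ℤ)) :=
            abs_of_pos (zpow_pos (by norm_num) _)
          rw [h1]
          have h2 : |(((cz i : ℤ) : ℝ) - if i = 0 then 0 else ((cz (i - 1) : ℤ) : ℝ))| ≤ 1 := by
            rw [hcz]
            split_ifs <;> simp <;> split_ifs <;> norm_num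
          nlinarith [zpow_pos (show (0:ℝ) < 3 from by norm_num) ((j : ℤ) - (i : ℤ))]
      _ = (1 - δ) / 2 := by
          rw [Finset.sum_Ico_eq_sum_range]
          have hkL : k - (j + 1) = L := by omega
          rw [hkL]
          have hterm : ∀ l ∈ Finset.range L,
              (3 : ℝ) ^ ((j : ℤ) - ((j + 1 + l : ℕ) : ℤ)) = (1 / 3) * (1 / 3) ^ l := by
            intro l _
            have : ((j : ℤ) - ((j + 1 + l : ℕ) : ℤ)) = -(1 + l) := by push_cast; ring
            rw [this, zpow_neg, zpow_add₀ h3ne, zpow_one, zpow_natCast, mul_inv,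
              ← inv_pow]
            norm_num
          rw [Finset.sum_congr rfl hterm, ← Finset.mul_sum]
          rw [geom_sum_eq (by norm_num : (1/3 : ℝ) ≠ 1) L]
          rw [hδ, show ((1:ℝ)/3) ^ L = ((3:ℝ) ^ L)⁻¹ from by rw [one_div, inv_pow]]
          have h3L : (0:ℝ) < (3:ℝ) ^ L := by positivity
          field_simp
          ring
  -- cos (π t) ≥ δ
  have hcost : δ ≤ Real.cos (Real.pi * t) := by
    have hπ := Real.pi_pos
    have h1 : |Real.pi * t| ≤ Real.pi * (1 - δ) / 2 := by
      rw [abs_mul, abs_of_pos hπ]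
      calc Real.pi * |t| ≤ Real.pi * ((1 - δ) / 2) :=
            mul_le_mul_of_nonneg_left htb hπ.le
        _ = Real.pi * (1 - δ) / 2 := by ring
    have h2 : Real.cos (Real.pi * (1 - δ) / 2) ≤ Real.cos |Real.pi * t| := by
      apply Real.cos_le_cos_of_nonneg_of_le_pi (abs_nonneg _) _ h1
      nlinarith
    rw [Real.cos_abs] at h2
    have h3 : Real.cos (Real.pi * (1 - δ) / 2) = Real.sin (Real.pi * δ / 2) := by
      rw [show Real.pi * (1 - δ) / 2 = Real.pi / 2 - Real.pi * δ / 2 from by ring,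
        Real.cos_pi_div_two_sub]
    have h4 : δ ≤ Real.sin (Real.pi * δ / 2) := by
      have h5 := Real.mul_le_sin (x := Real.pi * δ / 2) (by positivity) (by nlinarith)
      have h6 : 2 / Real.pi * (Real.pi * δ / 2) = δ := by
        field_simp
      linarith [h6 ▸ h5]
    linarith [h3 ▸ h2]
  -- finish
  rw [hcosval]
  have hδ2 : ((3 : ℝ) ^ (k - 1))⁻¹ ≤ δ := by
    rw [hδ]
    apply inv_anti₀ (by positivity)
    apply pow_le_pow_right₀ (by norm_num : (1:ℝ) ≤ 3)
    omega
  by_cases hb : 0 ≤ b j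
  · rw [if_pos hb, one_mul, abs_of_nonneg hb]
    rcases eq_or_lt_of_le hb with hb0 | hb0
    · simp [← hb0]
    · apply mul_le_mul_of_nonneg_left _ hb
      linarith
  · rw [if_neg hb, abs_of_neg (not_le.1 hb)]
    have : b j * (-1 * Real.cos (Real.pi * t)) = -b j * Real.cos (Real.pi * t) := by ring
    rw [this]
    apply mul_le_mul_of_nonneg_left _ (by linarith [not_le.1 hb])
    linarith

end Stmt2Aux

theorem stmt2 (Γ : Subgroup (SL2 × SL2)) (hcount : Countable Γ)
    (A α ε : ℝ) (hA : 0 < A) (hα : 0 < α) (hε : 0 < ε)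
    (hN : ∀ (x : SL2) (R : ℝ), 0 < R →
      (orbitSet (Γ : Set (SL2 × SL2)) x R).Finite ∧
      ((orbitSet (Γ : Set (SL2 × SL2)) x R).ncard : ℝ) < A * Real.exp (α * R))
    (k : ℕ) (hk : 1 ≤ k) (b : ℕ → ℝ) (hb : ∃ j < k, b j ≠ 0)
    (m : ℕ) (hm : mConst (3 ^ (k - 1) * A) α ε (3 ^ (k - 1)) < 2 * m)
    (x : SL2) (hx : gnorm x ≤ 4 * ε) :
    Summable (fun γ : {γ : SL2 × SL2 // γ ∈ Γ ∧ 4 * ε < gnorm (γ.1⁻¹ * x * γ.2)} =>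
      ‖psiB m k b (γ.1.1⁻¹ * x * γ.1.2)‖) ∧
    ∑' γ : {γ : SL2 × SL2 // γ ∈ Γ ∧ 4 * ε < gnorm (γ.1⁻¹ * x * γ.2)},
        ‖psiB m k b (γ.1.1⁻¹ * x * γ.1.2)‖ <
      Real.cosh ε ^ (-(2 * m : ℤ)) * fb k b (Real.tanh ε) := by
  classical
  obtain ⟨j₀, hj₀k, hbj₀⟩ := hb
  unfold mConst at hm
  set T := {γ : SL2 × SL2 // γ ∈ Γ ∧ 4 * ε < gnorm (γ.1⁻¹ * x * γ.2)} with hT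
  set s : ℕ := 3 ^ (k - 1) with hs_def
  have hs1 : 1 ≤ s := Nat.one_le_pow _ _ (by norm_num)
  set c : ℝ := Real.cosh ε with hc_def
  have hc1 : 1 < c := by rw [hc_def]; exact Real.one_lt_cosh.2 (ne_of_gt hε)
  have hc0 : (0:ℝ) < c := by linarith
  set τ : ℝ := Real.tanh ε with hτ_def
  have hτ0 : 0 < τ := Stmt2Aux.tanh_pos' hε
  set e2 : ℝ := Real.exp (2 * α * ε) with he2_def
  have he21 : 1 ≤ e2 := by rw [he2_def]; exact Real.one_le_exp (by positivity)
  -- A ≥ 1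
  have hgnorm_one : gnorm (1 : SL2) = 0 := by
    have h1 : gnorm (1 : SL2) = acosh 1 := by
      unfold gnorm
      norm_num [Matrix.SpecialLinearGroup.coe_one, Matrix.one_apply]
    rw [h1]
    unfold acosh
    norm_num
  have hA1 : 1 ≤ A := by
    by_contra hA1
    push_neg at hA1
    have hlA : Real.log A < 0 := Real.log_neg hA hA1
    have hR0 : 0 < -Real.log A / (2 * α) := by
      apply div_pos (by linarith) (by linarith)
    obtain ⟨hfin, hlt⟩ := hN 1 (-Real.log A / (2 * α)) hR0
    have hmem : (1 : SL2 × SL2) ∈ orbitSet (Γ : Set (SL2 × SL2)) 1 (-Real.log A / (2 * α)) := by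
      refine ⟨Γ.one_mem, ?_⟩
      have h2 : (1 : SL2 × SL2).1 * 1 * (1 : SL2 × SL2).2⁻¹ = (1 : SL2) := by
        simp
      rw [h2, hgnorm_one]
      linarith
    have hcard : 1 ≤ (orbitSet (Γ : Set (SL2 × SL2)) 1 (-Real.log A / (2 * α))).ncard :=
      (Set.ncard_pos hfin).2 ⟨1, hmem⟩
    have h2 : (1:ℝ) < A * Real.exp (α * (-Real.log A / (2 * α))) :=
      lt_of_le_of_lt (by exact_mod_cast hcard) hlt
    have h3 : 0 < Real.log (A * Real.exp (α * (-Real.log A / (2 * α)))) := Real.log_pos h2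
    rw [Real.log_mul (ne_of_gt hA) (Real.exp_ne_zero _), Real.log_exp] at h3
    have h4 : α * (-Real.log A / (2 * α)) = -Real.log A / 2 := by
      field_simp
    rw [h4] at h3
    linarith
  set X : ℝ := 2 ^ s * (3 ^ (k - 1) * A) * Real.exp (6 * α * ε) with hX_def
  have hX2 : 2 ≤ X := by
    rw [hX_def]
    have h1 : (2:ℝ) ≤ 2 ^ s := by
      calc (2:ℝ) = 2 ^ 1 := (pow_one 2).symm
        _ ≤ 2 ^ s := pow_le_pow_right₀ (by norm_num) hs1
    have h2 : (1:ℝ) ≤ 3 ^ (k - 1) := one_le_pow₀ (by norm_num)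
    have h3 : (1:ℝ) ≤ Real.exp (6 * α * ε) := Real.one_le_exp (by positivity)
    have h4 : (1:ℝ) ≤ 3 ^ (k - 1) * A := by nlinarith
    calc (2:ℝ) ≤ 2 ^ s := h1
      _ = 2 ^ s * 1 := (mul_one _).symm
      _ ≤ 2 ^ s * (3 ^ (k - 1) * A) := mul_le_mul_of_nonneg_left h4 (by positivity)
      _ = 2 ^ s * (3 ^ (k - 1) * A) * 1 := (mul_one _).symm
      _ ≤ 2 ^ s * (3 ^ (k - 1) * A) * Real.exp (6 * α * ε) := by
          apply mul_le_mul_of_nonneg_left h3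
          nlinarith
  have hX0 : (0:ℝ) < 1 + X := by linarith
  have hXpos : (0:ℝ) < X := by linarith
  -- D ≤ c^(2m)
  have hD : 2 ^ s * e2 * (1 + X) ≤ c ^ (2 * m) := by
    have hlogc : (0:ℝ) < Real.log c := Real.log_pos hc1
    rw [div_lt_iff₀ hlogc] at hm
    have h1 : 2 ^ s * e2 * (1 + X) =
        Real.exp (Real.log 2 * s + 2 * α * ε + Real.log (1 + X)) := by
      rw [Real.exp_add, Real.exp_add, Real.exp_log hX0, he2_def]
      congr 2
      rw [mul_comm (Real.log 2) (s:ℝ), Real.exp_nat_mul,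
        Real.exp_log (by norm_num : (0:ℝ) < 2)]
    have h2 : c ^ (2 * m) = Real.exp (2 * m * Real.log c) := by
      conv_lhs => rw [← Real.exp_log hc0]
      rw [← Real.exp_nat_mul]
      congr 1
      push_cast
      ring
    rw [h1, h2]
    exact Real.exp_le_exp.2 (le_of_lt hm)
  -- per-γ layer data
  have hgn : ∀ γ : T,
      3 ≤ ⌈gnorm (γ.1.1⁻¹ * x * γ.1.2) / (2 * ε)⌉₊ ∧
      2 * ((⌈gnorm (γ.1.1⁻¹ * x * γ.1.2) / (2 * ε)⌉₊ : ℝ) - 1) * ε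
        < gnorm (γ.1.1⁻¹ * x * γ.1.2) ∧
      gnorm (γ.1.1⁻¹ * x * γ.1.2) ≤ 2 * ⌈gnorm (γ.1.1⁻¹ * x * γ.1.2) / (2 * ε)⌉₊ * ε := by
    intro γ
    have h4 : 4 * ε < gnorm (γ.1.1⁻¹ * x * γ.1.2) := γ.2.2
    have h2e : (0:ℝ) < 2 * ε := by linarith
    set g := gnorm (γ.1.1⁻¹ * x * γ.1.2) with hg
    have hdiv0 : 0 ≤ g / (2 * ε) :=
      div_nonneg (by rw [hg]; exact Stmt2Aux.gnorm_nonneg' _) h2e.le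
    refine ⟨?_, ?_, ?_⟩
    · have : (2:ℕ) < ⌈g / (2 * ε)⌉₊ := by
        rw [Nat.lt_ceil]
        rw [lt_div_iff₀ h2e]
        push_cast
        linarith
      omega
    · have h5 := Nat.ceil_lt_add_one hdiv0
      have h6 : (⌈g / (2 * ε)⌉₊ : ℝ) - 1 < g / (2 * ε) := by linarith
      calc 2 * ((⌈g / (2 * ε)⌉₊ : ℝ) - 1) * ε = ((⌈g / (2 * ε)⌉₊ : ℝ) - 1) * (2 * ε) := by ring
        _ < g / (2 * ε) * (2 * ε) := by
            exact mul_lt_mul_of_pos_right h6 h2e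
        _ = g := by field_simp
    · have h5 := Nat.le_ceil (g / (2 * ε))
      calc g = g / (2 * ε) * (2 * ε) := by field_simp
        _ ≤ (⌈g / (2 * ε)⌉₊ : ℝ) * (2 * ε) := mul_le_mul_of_nonneg_right h5 h2e.le
        _ = 2 * ⌈g / (2 * ε)⌉₊ * ε := by ring
  -- counting
  have hcard : ∀ (u : Finset T) (n : ℕ), 3 ≤ n →
      ((u.filter fun γ => ⌈gnorm (γ.1.1⁻¹ * x * γ.1.2) / (2 * ε)⌉₊ = n).card : ℝ)
        ≤ A * e2 ^ n := by
    intro u n hn3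
    have hR0 : (0:ℝ) < 2 * n * ε := by
      have : (0:ℝ) < (n:ℝ) := by exact_mod_cast Nat.lt_of_lt_of_le (by norm_num) hn3
      positivity
    obtain ⟨hfin, hlt⟩ := hN x (2 * n * ε) hR0
    have hinj : Function.Injective (fun γ : T => (γ.1)⁻¹) := by
      intro a b h
      apply Subtype.ext
      have : (a.1)⁻¹ = (b.1)⁻¹ := h
      exact inv_injective this
    have hsub : (fun γ : T => (γ.1)⁻¹) ''
        ↑(u.filter fun γ => ⌈gnorm (γ.1.1⁻¹ * x * γ.1.2) / (2 * ε)⌉₊ = n)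
        ⊆ orbitSet (Γ : Set (SL2 × SL2)) x (2 * n * ε) := by
      rintro z ⟨γ, hγ, rfl⟩
      have hγf : ⌈gnorm (γ.1.1⁻¹ * x * γ.1.2) / (2 * ε)⌉₊ = n :=
        (Finset.mem_filter.1 (Finset.mem_coe.1 hγ)).2
      refine ⟨inv_mem γ.2.1, ?_⟩
      have heq : ((γ.1)⁻¹).1 * x * (((γ.1)⁻¹).2)⁻¹ = γ.1.1⁻¹ * x * γ.1.2 := by
        simp
      rw [heq]
      have h5 := Nat.le_ceil (gnorm (γ.1.1⁻¹ * x * γ.1.2) / (2 * ε))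
      rw [hγf] at h5
      have h2e : (0:ℝ) < 2 * ε := by linarith
      calc gnorm (γ.1.1⁻¹ * x * γ.1.2)
          = gnorm (γ.1.1⁻¹ * x * γ.1.2) / (2 * ε) * (2 * ε) := by field_simp
        _ ≤ (n : ℝ) * (2 * ε) := mul_le_mul_of_nonneg_right h5 h2e.le
        _ = 2 * n * ε := by ring
    have h1 : (u.filter fun γ => ⌈gnorm (γ.1.1⁻¹ * x * γ.1.2) / (2 * ε)⌉₊ = n).card
        ≤ (orbitSet (Γ : Set (SL2 × SL2)) x (2 * n * ε)).ncard := by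
      rw [← Set.ncard_coe_finset,
        ← Set.ncard_image_of_injective _ hinj]
      exact Set.ncard_le_ncard hsub hfin
    calc ((u.filter fun γ => ⌈gnorm (γ.1.1⁻¹ * x * γ.1.2) / (2 * ε)⌉₊ = n).card : ℝ)
        ≤ ((orbitSet (Γ : Set (SL2 × SL2)) x (2 * n * ε)).ncard : ℝ) := by exact_mod_cast h1
      _ ≤ A * Real.exp (α * (2 * n * ε)) := le_of_lt hlt
      _ = A * e2 ^ n := by
          rw [he2_def, show α * (2 * (n:ℝ) * ε) = (n:ℝ) * (2 * α * ε) from by ring,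
            Real.exp_nat_mul]
  -- per-j fiberwise sums
  have hsumj : ∀ (u : Finset T) (j : ℕ), j < k →
      ∑ γ ∈ u, ‖psi m (3 ^ j) (γ.1.1⁻¹ * x * γ.1.2)‖
        ≤ A * e2 ^ 2 * (3 / 2) ^ s * (1 + X)⁻¹ * τ ^ 3 ^ j * (c ^ (2 * m))⁻¹ * (9 / 7) := by
    intro u j hjk'
    have hK : 3 ^ j ≤ s := by
      rw [hs_def]
      exact Nat.pow_le_pow_right (by norm_num) (by omega)
    have hmap : ∀ γ ∈ u, ⌈gnorm (γ.1.1⁻¹ * x * γ.1.2) / (2 * ε)⌉₊ ∈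
        u.image (fun γ : T => ⌈gnorm (γ.1.1⁻¹ * x * γ.1.2) / (2 * ε)⌉₊) :=
      fun γ hγ => Finset.mem_image_of_mem _ hγ
    rw [← Finset.sum_fiberwise_of_maps_to hmap
      (fun γ => ‖psi m (3 ^ j) (γ.1.1⁻¹ * x * γ.1.2)‖)]
    have him3 : ∀ n ∈ u.image (fun γ : T => ⌈gnorm (γ.1.1⁻¹ * x * γ.1.2) / (2 * ε)⌉₊),
        3 ≤ n := by
      intro n hn
      obtain ⟨γ₀, _, hγ₀⟩ := Finset.mem_image.1 hn
      exact hγ₀ ▸ (hgn γ₀).1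
    have hCST0 : (0:ℝ) ≤ A * e2 ^ 2 * (3 / 2) ^ s * (1 + X)⁻¹ * τ ^ 3 ^ j * (c ^ (2 * m))⁻¹ :=
      mul_nonneg (mul_nonneg (mul_nonneg (mul_nonneg
        (mul_nonneg hA.le (pow_nonneg (by linarith) 2)) (by positivity))
        (inv_nonneg.2 hX0.le)) (pow_nonneg hτ0.le _))
        (inv_nonneg.2 (pow_nonneg hc0.le _))
    have hfiber : ∀ n ∈ u.image (fun γ : T => ⌈gnorm (γ.1.1⁻¹ * x * γ.1.2) / (2 * ε)⌉₊),
        ∑ γ ∈ u.filter (fun γ => ⌈gnorm (γ.1.1⁻¹ * x * γ.1.2) / (2 * ε)⌉₊ = n),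
            ‖psi m (3 ^ j) (γ.1.1⁻¹ * x * γ.1.2)‖
          ≤ (A * e2 ^ 2 * (3 / 2) ^ s * (1 + X)⁻¹ * τ ^ 3 ^ j * (c ^ (2 * m))⁻¹)
              * (2 / 9) ^ (n - 3) := by
      intro n hn
      have hn3 : 3 ≤ n := him3 n hn
      have hbound : ∀ γ ∈ u.filter (fun γ => ⌈gnorm (γ.1.1⁻¹ * x * γ.1.2) / (2 * ε)⌉₊ = n),
          ‖psi m (3 ^ j) (γ.1.1⁻¹ * x * γ.1.2)‖
            ≤ ((n:ℝ) * τ) ^ 3 ^ j * ((c ^ (n - 1)) ^ (2 * m))⁻¹ := by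
        intro γ hγ
        have hNf := (Finset.mem_filter.1 hγ).2
        obtain ⟨h3, hlo, hup⟩ := hgn γ
        rw [hNf] at hlo hup
        exact Stmt2Aux.core hε m (3 ^ j) _ n hn3 hlo hup
      have hterm0 : (0:ℝ) ≤ ((n:ℝ) * τ) ^ 3 ^ j * ((c ^ (n - 1)) ^ (2 * m))⁻¹ := by
        apply mul_nonneg (pow_nonneg (mul_nonneg (Nat.cast_nonneg n) hτ0.le) _)
        exact inv_nonneg.2 (pow_nonneg (pow_nonneg hc0.le _) _)
      calc ∑ γ ∈ u.filter (fun γ => ⌈gnorm (γ.1.1⁻¹ * x * γ.1.2) / (2 * ε)⌉₊ = n),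
              ‖psi m (3 ^ j) (γ.1.1⁻¹ * x * γ.1.2)‖
          ≤ (u.filter (fun γ => ⌈gnorm (γ.1.1⁻¹ * x * γ.1.2) / (2 * ε)⌉₊ = n)).card
              • (((n:ℝ) * τ) ^ 3 ^ j * ((c ^ (n - 1)) ^ (2 * m))⁻¹) :=
            Finset.sum_le_card_nsmul _ _ _ hbound
        _ = ((u.filter (fun γ => ⌈gnorm (γ.1.1⁻¹ * x * γ.1.2) / (2 * ε)⌉₊ = n)).card : ℝ)
              * (((n:ℝ) * τ) ^ 3 ^ j * ((c ^ (n - 1)) ^ (2 * m))⁻¹) := nsmul_eq_mul _ _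
        _ ≤ (A * e2 ^ n) * (((n:ℝ) * τ) ^ 3 ^ j * ((c ^ (n - 1)) ^ (2 * m))⁻¹) :=
            mul_le_mul_of_nonneg_right (hcard u n hn3) hterm0
        _ ≤ (A * e2 ^ 2 * (3 / 2) ^ s * (1 + X)⁻¹ * τ ^ 3 ^ j * (c ^ (2 * m))⁻¹)
              * (2 / 9) ^ (n - 3) := by
            obtain ⟨i, rfl⟩ : ∃ i, n = i + 3 := ⟨n - 3, by omega⟩
            have hper := Stmt2Aux.perN s (3 ^ j) (2 * m) i A e2 τ X c hA.le he21 hτ0.le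
              hX2 hs1 hK hc0 hD
            have hcst : ((i + 3 : ℕ) : ℝ) = (i : ℝ) + 3 := by push_cast; ring
            rw [hcst, show i + 3 - 1 = i + 2 from by omega, show i + 3 - 3 = i from by omega,
              ← mul_assoc]
            exact hper
    calc ∑ n ∈ u.image (fun γ : T => ⌈gnorm (γ.1.1⁻¹ * x * γ.1.2) / (2 * ε)⌉₊),
            ∑ γ ∈ u.filter (fun γ => ⌈gnorm (γ.1.1⁻¹ * x * γ.1.2) / (2 * ε)⌉₊ = n),
              ‖psi m (3 ^ j) (γ.1.1⁻¹ * x * γ.1.2)‖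
        ≤ ∑ n ∈ u.image (fun γ : T => ⌈gnorm (γ.1.1⁻¹ * x * γ.1.2) / (2 * ε)⌉₊),
            (A * e2 ^ 2 * (3 / 2) ^ s * (1 + X)⁻¹ * τ ^ 3 ^ j * (c ^ (2 * m))⁻¹)
              * (2 / 9) ^ (n - 3) := Finset.sum_le_sum hfiber
      _ = (A * e2 ^ 2 * (3 / 2) ^ s * (1 + X)⁻¹ * τ ^ 3 ^ j * (c ^ (2 * m))⁻¹)
            * ∑ n ∈ u.image (fun γ : T => ⌈gnorm (γ.1.1⁻¹ * x * γ.1.2) / (2 * ε)⌉₊),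
              (2 / 9 : ℝ) ^ (n - 3) := by rw [Finset.mul_sum]
      _ ≤ (A * e2 ^ 2 * (3 / 2) ^ s * (1 + X)⁻¹ * τ ^ 3 ^ j * (c ^ (2 * m))⁻¹) * (9 / 7) :=
            mul_le_mul_of_nonneg_left (Stmt2Aux.sum_pow_sub_le _ him3) hCST0
  -- pointwise bound and key estimate
  have hpt : ∀ γ : T, ‖psiB m k b (γ.1.1⁻¹ * x * γ.1.2)‖
      ≤ ∑ j ∈ Finset.range k, |b j| * ‖psi m (3 ^ j) (γ.1.1⁻¹ * x * γ.1.2)‖ := by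
    intro γ
    unfold psiB
    calc ‖∑ j ∈ Finset.range k, (b j : ℂ) * psi m (3 ^ j) (γ.1.1⁻¹ * x * γ.1.2)‖
        ≤ ∑ j ∈ Finset.range k,
            ‖(b j : ℂ) * psi m (3 ^ j) (γ.1.1⁻¹ * x * γ.1.2)‖ :=
          norm_sum_le _ _
      _ = ∑ j ∈ Finset.range k, |b j| * ‖psi m (3 ^ j) (γ.1.1⁻¹ * x * γ.1.2)‖ := by
          refine Finset.sum_congr rfl fun j _ => ?_
          rw [norm_mul, Complex.norm_real, Real.norm_eq_abs]
  have hkey : ∀ u : Finset T,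
      ∑ γ ∈ u, ‖psiB m k b (γ.1.1⁻¹ * x * γ.1.2)‖
        ≤ ∑ j ∈ Finset.range k,
            |b j| * (A * e2 ^ 2 * (3 / 2) ^ s * (1 + X)⁻¹ * τ ^ 3 ^ j * (c ^ (2 * m))⁻¹
              * (9 / 7)) := by
    intro u
    calc ∑ γ ∈ u, ‖psiB m k b (γ.1.1⁻¹ * x * γ.1.2)‖
        ≤ ∑ γ ∈ u, ∑ j ∈ Finset.range k,
            |b j| * ‖psi m (3 ^ j) (γ.1.1⁻¹ * x * γ.1.2)‖ :=
          Finset.sum_le_sum fun γ _ => hpt γ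
      _ = ∑ j ∈ Finset.range k, ∑ γ ∈ u,
            |b j| * ‖psi m (3 ^ j) (γ.1.1⁻¹ * x * γ.1.2)‖ := Finset.sum_comm
      _ ≤ ∑ j ∈ Finset.range k,
            |b j| * (A * e2 ^ 2 * (3 / 2) ^ s * (1 + X)⁻¹ * τ ^ 3 ^ j * (c ^ (2 * m))⁻¹
              * (9 / 7)) := by
          refine Finset.sum_le_sum fun j hj => ?_
          rw [← Finset.mul_sum]
          exact mul_le_mul_of_nonneg_left (hsumj u j (Finset.mem_range.1 hj)) (abs_nonneg _)
  have hnonneg : (0 : T → ℝ) ≤ fun γ : T => ‖psiB m k b (γ.1.1⁻¹ * x * γ.1.2)‖ :=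
    fun γ => norm_nonneg _
  have hsummable : Summable (fun γ : T => ‖psiB m k b (γ.1.1⁻¹ * x * γ.1.2)‖) :=
    summable_of_sum_le hnonneg hkey
  -- the comparison constant
  have hCC : A * e2 ^ 2 * (3 / 2) ^ s * (9 / 7) * (1 + X)⁻¹ < ((3:ℝ) ^ (k - 1))⁻¹ := by
    have hG0 : (0:ℝ) < (3:ℝ) ^ (k - 1) := by positivity
    have he20 : (0:ℝ) < e2 := by linarith
    have hfac : (0:ℝ) < A * e2 ^ 2 * (3 / 2) ^ s * (9 / 7) :=
      mul_pos (mul_pos (mul_pos hA (pow_pos he20 2)) (by positivity)) (by norm_num)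
    have h1 : (1 + X)⁻¹ < X⁻¹ := by
      apply inv_strictAnti₀ hXpos
      linarith
    have h2 : A * e2 ^ 2 * (3 / 2) ^ s * (9 / 7) * X⁻¹ ≤ ((3:ℝ) ^ (k - 1))⁻¹ := by
      rw [← div_eq_mul_inv, ← one_div, div_le_div_iff₀ hXpos hG0]
      rw [hX_def, one_mul]
      have he6 : Real.exp (6 * α * ε) = e2 ^ 3 := by
        rw [he2_def, ← Real.exp_nat_mul]
        congr 1
        push_cast
        ring
      rw [he6]
      have h43 : (9/7 : ℝ) ≤ (4/3) ^ s := by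
        calc (9/7:ℝ) ≤ 4/3 := by norm_num
          _ ≤ (4/3) ^ s := le_self_pow₀ (by norm_num) (by omega)
      have h32 : (3/2:ℝ) ^ s * (9/7) ≤ 2 ^ s := by
        calc (3/2:ℝ) ^ s * (9/7) ≤ (3/2) ^ s * (4/3) ^ s :=
              mul_le_mul_of_nonneg_left h43 (by positivity)
          _ = 2 ^ s := by rw [← mul_pow]; norm_num
      have he2' : e2 ^ 2 ≤ e2 ^ 3 := pow_le_pow_right₀ he21 (by norm_num)
      calc A * e2 ^ 2 * (3/2) ^ s * (9/7) * 3 ^ (k-1)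
          = (A * e2 ^ 2 * ((3/2) ^ s * (9/7))) * 3 ^ (k-1) := by ring
        _ ≤ (A * e2 ^ 2 * 2 ^ s) * 3 ^ (k-1) := by
            apply mul_le_mul_of_nonneg_right _ hG0.le
            exact mul_le_mul_of_nonneg_left h32
              (mul_nonneg hA.le (pow_nonneg he20.le 2))
        _ ≤ (A * e2 ^ 3 * 2 ^ s) * 3 ^ (k-1) := by
            apply mul_le_mul_of_nonneg_right _ hG0.le
            apply mul_le_mul_of_nonneg_right _ (by positivity)
            exact mul_le_mul_of_nonneg_left he2' hA.le
        _ = 2 ^ s * (3 ^ (k-1) * A) * e2 ^ 3 := by ring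
    calc A * e2 ^ 2 * (3 / 2) ^ s * (9 / 7) * (1 + X)⁻¹
        < A * e2 ^ 2 * (3 / 2) ^ s * (9 / 7) * X⁻¹ := (mul_lt_mul_iff_right₀ hfac).2 h1
      _ ≤ ((3:ℝ) ^ (k - 1))⁻¹ := h2
  -- termwise comparison with the RHS
  have hperle : ∀ j ∈ Finset.range k,
      |b j| * (A * e2 ^ 2 * (3 / 2) ^ s * (1 + X)⁻¹ * τ ^ 3 ^ j * (c ^ (2 * m))⁻¹ * (9 / 7))
        ≤ (c ^ (2 * m))⁻¹
            * (b j * Real.cos (3 ^ j * thetaAN (signOf b) k 3) * τ ^ 3 ^ j) := by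
    intro j hj
    have htrig := Stmt2Aux.trig k b j (Finset.mem_range.1 hj)
    have hpos : (0:ℝ) < τ ^ 3 ^ j * (c ^ (2 * m))⁻¹ :=
      mul_pos (pow_pos hτ0 _) (inv_pos.2 (pow_pos hc0 _))
    calc |b j| * (A * e2 ^ 2 * (3 / 2) ^ s * (1 + X)⁻¹ * τ ^ 3 ^ j * (c ^ (2 * m))⁻¹ * (9 / 7))
        = (|b j| * (A * e2 ^ 2 * (3 / 2) ^ s * (9 / 7) * (1 + X)⁻¹))
            * (τ ^ 3 ^ j * (c ^ (2 * m))⁻¹) := by ring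
      _ ≤ (|b j| * ((3:ℝ) ^ (k - 1))⁻¹) * (τ ^ 3 ^ j * (c ^ (2 * m))⁻¹) :=
          mul_le_mul_of_nonneg_right
            (mul_le_mul_of_nonneg_left hCC.le (abs_nonneg _)) hpos.le
      _ ≤ (b j * Real.cos (3 ^ j * thetaAN (signOf b) k 3))
            * (τ ^ 3 ^ j * (c ^ (2 * m))⁻¹) :=
          mul_le_mul_of_nonneg_right htrig hpos.le
      _ = (c ^ (2 * m))⁻¹
            * (b j * Real.cos (3 ^ j * thetaAN (signOf b) k 3) * τ ^ 3 ^ j) := by ring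
  have hperlt :
      |b j₀| * (A * e2 ^ 2 * (3 / 2) ^ s * (1 + X)⁻¹ * τ ^ 3 ^ j₀ * (c ^ (2 * m))⁻¹ * (9 / 7))
        < (c ^ (2 * m))⁻¹
            * (b j₀ * Real.cos (3 ^ j₀ * thetaAN (signOf b) k 3) * τ ^ 3 ^ j₀) := by
    have htrig := Stmt2Aux.trig k b j₀ hj₀k
    have hpos : (0:ℝ) < τ ^ 3 ^ j₀ * (c ^ (2 * m))⁻¹ :=
      mul_pos (pow_pos hτ0 _) (inv_pos.2 (pow_pos hc0 _))
    calc |b j₀| * (A * e2 ^ 2 * (3 / 2) ^ s * (1 + X)⁻¹ * τ ^ 3 ^ j₀ * (c ^ (2 * m))⁻¹ * (9 / 7))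
        = (|b j₀| * (A * e2 ^ 2 * (3 / 2) ^ s * (9 / 7) * (1 + X)⁻¹))
            * (τ ^ 3 ^ j₀ * (c ^ (2 * m))⁻¹) := by ring
      _ < (|b j₀| * ((3:ℝ) ^ (k - 1))⁻¹) * (τ ^ 3 ^ j₀ * (c ^ (2 * m))⁻¹) :=
          mul_lt_mul_of_pos_right
            ((mul_lt_mul_iff_right₀ (abs_pos.2 hbj₀)).2 hCC) hpos
      _ ≤ (b j₀ * Real.cos (3 ^ j₀ * thetaAN (signOf b) k 3))
            * (τ ^ 3 ^ j₀ * (c ^ (2 * m))⁻¹) :=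
          mul_le_mul_of_nonneg_right htrig hpos.le
      _ = (c ^ (2 * m))⁻¹
            * (b j₀ * Real.cos (3 ^ j₀ * thetaAN (signOf b) k 3) * τ ^ 3 ^ j₀) := by ring
  -- RHS expansion
  have hRHS : c ^ (-(2 * m : ℤ)) * fb k b τ
      = ∑ j ∈ Finset.range k,
          (c ^ (2 * m))⁻¹
            * (b j * Real.cos (3 ^ j * thetaAN (signOf b) k 3) * τ ^ 3 ^ j) := by
    unfold fb
    rw [Finset.mul_sum]
    refine Finset.sum_congr rfl fun j _ => ?_
    rw [show (-(2 * m : ℤ)) = -((2 * m : ℕ) : ℤ) from by push_cast; ring, zpow_neg,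
      zpow_natCast]
  refine ⟨hsummable, ?_⟩
  have htsum := Summable.tsum_le_of_sum_le hsummable hkey
  have hlt : ∑ j ∈ Finset.range k,
      |b j| * (A * e2 ^ 2 * (3 / 2) ^ s * (1 + X)⁻¹ * τ ^ 3 ^ j * (c ^ (2 * m))⁻¹ * (9 / 7))
      < ∑ j ∈ Finset.range k,
          (c ^ (2 * m))⁻¹
            * (b j * Real.cos (3 ^ j * thetaAN (signOf b) k 3) * τ ^ 3 ^ j) :=
    Finset.sum_lt_sum hperle ⟨j₀, Finset.mem_range.2 hj₀k, hperlt⟩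
  rw [hRHS]
  exact lt_of_le_of_lt htsum hlt
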